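/- Let V be a finite-dimensional vector space over F and u an endomorphism of V that is the sum of two square-zero endomorphisms. Then for any η ∈ {1,−1}, the endomorphism h_η(u) of V × V* defined by h_η(u)(x,φ) = (u(x), η·(φ∘u)) is also a sum of two square-zero endomorphisms a₁', a₂' of V × V*, each of which satisfies H^ε(a_i'(X), Y) = η·H^ε(X, a_i'(Y)) for all X, Y, where H^ε((x,φ),(y,ψ)) = φ(y)+ε·ψ(x). -/
import Mathlib


/-- If `u` is a sum of two square-zero endomorphisms of `V`, then `h_η(u)` is a sum of
two square-zero endomorphisms of `V × V*` each of which satisfies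
`H^ε(aᵢ'(X), Y) = η · H^ε(X, aᵢ'(Y))`. -/
theorem hyperbolic_extension_square_zero_splitting
    {F V : Type*} [Field F] [AddCommGroup V] [Module F V] [FiniteDimensional F V]
    (u : Module.End F V)
    (hsplit : ∃ b₁ b₂ : Module.End F V, u = b₁ + b₂ ∧ b₁ ^ 2 = 0 ∧ b₂ ^ 2 = 0)
    (η : F) (hη : η = 1 ∨ η = -1) (ε : F) (hε : ε = 1 ∨ ε = -1)
    (h : Module.End F (V × Module.Dual F V))
    (hh : ∀ p : V × Module.Dual F V, h p = (u p.1, η • (p.2 ∘ₗ u)))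
    (H : LinearMap.BilinForm F (V × Module.Dual F V))
    (hH : ∀ p q : V × Module.Dual F V, H p q = p.2 q.1 + ε * q.2 p.1) :
    ∃ a₁' a₂' : Module.End F (V × Module.Dual F V),
      h = a₁' + a₂' ∧ a₁' ^ 2 = 0 ∧ a₂' ^ 2 = 0 ∧
      (∀ X Y, H (a₁' X) Y = η * H X (a₁' Y)) ∧
      (∀ X Y, H (a₂' X) Y = η * H X (a₂' Y)) := by
  obtain ⟨b₁, b₂, hu, hb₁, hb₂⟩ := hsplit
  have hη2 : η * η = 1 := by rcases hη with rfl | rfl <;> ring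
  set A : Module.End F V → Module.End F (V × Module.Dual F V) :=
    fun b => b.prodMap (η • b.dualMap) with hA
  have hApply : ∀ b (p : V × Module.Dual F V), A b p = (b p.1, η • (p.2 ∘ₗ b)) := by
    intro b p
    rfl
  have hsq : ∀ b : Module.End F V, b ^ 2 = 0 → (A b) ^ 2 = 0 := by
    intro b hb
    have hbb : ∀ x, b (b x) = 0 := by
      intro x
      have := congrFun (congrArg DFunLike.coe hb) x
      simpa [pow_two, Module.End.mul_apply] using this
    apply LinearMap.ext; intro p
    rw [pow_two, Module.End.mul_apply, hApply, hApply]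
    refine Prod.ext ?_ ?_
    · simpa using hbb p.1
    · ext x
      simp [LinearMap.comp_apply, hbb]
  have hadj : ∀ b : Module.End F V, ∀ X Y, H (A b X) Y = η * H X (A b Y) := by
    intro b X Y
    simp only [hApply, hH]
    simp only [LinearMap.smul_apply, LinearMap.comp_apply, smul_eq_mul]
    linear_combination (-(ε * Y.2 (b X.1))) * hη2
  refine ⟨A b₁, A b₂, ?_, hsq b₁ hb₁, hsq b₂ hb₂, hadj b₁, hadj b₂⟩
  ext p <;> simp [hh, hApply, hu, LinearMap.comp_add, mul_add, add_comm]
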